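/- Let Λ ⊂ S be discrete with weights w : Λ → ℝ⁺. If there exists h > 0 such that R := sup_{(x,y,z)∈S} Σ_{λ ∈ Λ ∩ Q_h(x,y,z)} w(λ) < ∞, then the upper weighted shearlet density D⁺(Λ,w) = limsup_{H→∞} sup_{(x,y,z)∈S} (Σ_{λ ∈ Λ ∩ Q_H(x,y,z)} w(λ))/H⁴ is finite; in fact D⁺(Λ,w) ≤ R e^{9h/4}/h⁴. -/

import Mathlib

open MeasureTheory Real Filter Set
open scoped ENNReal
noncomputable section

/-- The parabolic scaling matrix `A_a = diag(a, √a)` acting on `ℝ²`. -/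
def Aa (a : ℝ) (t : ℝ × ℝ) : ℝ × ℝ := (a * t.1, Real.sqrt a * t.2)

/-- The shear matrix `S_s = [[1,s],[0,1]]` acting on `ℝ²`. -/
def Ss (s : ℝ) (t : ℝ × ℝ) : ℝ × ℝ := (t.1 + s * t.2, t.2)

/-- Underlying space of the shearlet group: `(a, s, t₁, t₂)`. -/
abbrev SG := ℝ × ℝ × ℝ × ℝ

/-- Shearlet group multiplication
`(a,s,t)·(a',s',t') = (a'a, s' + s√a', t' + S_{s'} A_{a'} t)`. -/
def smul (p q : SG) : SG :=
  (q.1 * p.1, q.2.1 + p.2.1 * Real.sqrt q.1, q.2.2 + Ss q.2.1 (Aa q.1 p.2.2))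

/-- The box `Q_h = [e^{-h/2}, e^{h/2}) × [-h/2, h/2) × [-h/2, h/2)²`. -/
def Qbox (h : ℝ) : Set SG :=
  Set.Ico (Real.exp (-h/2)) (Real.exp (h/2)) ×ˢ
    (Set.Ico (-h/2) (h/2) ×ˢ (Set.Ico (-h/2) (h/2) ×ˢ Set.Ico (-h/2) (h/2)))

/-- The left-translated box `Q_h(g) = g · Q_h`. -/
def boxAt (h : ℝ) (g : SG) : Set SG := (fun p => smul g p) '' Qbox h

/-- Weighted number of points of `Λ` in `K`: `#_w(Λ ∩ K)`. -/
def wNum (Λ : Set SG) (w : SG → ℝ) (K : Set SG) : ℝ≥0∞ :=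
  ∑' p : ↥(Λ ∩ K), ENNReal.ofReal (w p)

/-- Upper weighted shearlet density `D⁺(Λ, w)`. -/
def upperDensity (Λ : Set SG) (w : SG → ℝ) : ℝ≥0∞ :=
  Filter.limsup (fun h : ℝ =>
    ⨆ (g : SG) (_ : 0 < g.1), wNum Λ w (boxAt h g) / ENNReal.ofReal (h ^ 4)) Filter.atTop

/-- Lower weighted shearlet density `D⁻(Λ, w)`. -/
def lowerDensity (Λ : Set SG) (w : SG → ℝ) : ℝ≥0∞ :=
  Filter.liminf (fun h : ℝ =>
    ⨅ (g : SG) (_ : 0 < g.1), wNum Λ w (boxAt h g) / ENNReal.ofReal (h ^ 4)) Filter.atTop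

lemma sqrt_exp' (u : ℝ) : Real.sqrt (Real.exp u) = Real.exp (u / 2) := by
  rw [show Real.exp u = Real.exp (u/2) * Real.exp (u/2) by rw [← Real.exp_add]; ring_nf]
  exact Real.sqrt_mul_self (Real.exp_pos _).le

lemma smul_assoc' (g γ q : SG) (hq : 0 ≤ q.1) :
    smul g (smul γ q) = smul (smul g γ) q := by
  obtain ⟨g1, g2, g3, g4⟩ := g
  obtain ⟨c1, c2, c3, c4⟩ := γ
  obtain ⟨q1, q2, q3, q4⟩ := q
  obtain ⟨r, hr0, rfl⟩ : ∃ r, 0 ≤ r ∧ q1 = r ^ 2 :=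
    ⟨Real.sqrt q1, Real.sqrt_nonneg _, (Real.sq_sqrt hq).symm⟩
  simp only [smul, Ss, Aa, Prod.mk.injEq, Prod.ext_iff, Prod.mk_add_mk, Prod.fst_add, Prod.snd_add]
  rw [Real.sqrt_mul (by positivity) c1, Real.sqrt_sq hr0]
  refine ⟨by ring, by ring, by ring, by ring⟩

lemma boxAt_smul (h : ℝ) (g γ : SG) :
    boxAt h (smul g γ) = (fun p => smul g p) '' boxAt h γ := by
  unfold boxAt
  rw [← Set.image_comp]
  apply Set.image_congr
  intro q hq
  have hq1 : 0 ≤ q.1 := le_trans (Real.exp_pos _).le hq.1.1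
  exact (smul_assoc' g γ q hq1).symm

lemma wNum_mono (Λ : Set SG) (w : SG → ℝ) {K K' : Set SG} (hK : K ⊆ K') :
    wNum Λ w K ≤ wNum Λ w K' :=
  ENNReal.tsum_mono_subtype (fun p => ENNReal.ofReal (w p)) (Set.inter_subset_inter_right _ hK)

lemma wNum_biUnion_le (Λ : Set SG) (w : SG → ℝ) {ι : Type*} (T : Finset ι) (S : ι → Set SG) :
    wNum Λ w (⋃ t ∈ T, S t) ≤ ∑ t ∈ T, wNum Λ w (S t) := by
  unfold wNum
  calc (∑' p : ↥(Λ ∩ ⋃ t ∈ T, S t), ENNReal.ofReal (w p))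
      = ∑' p : ↥(⋃ t ∈ T, Λ ∩ S t), ENNReal.ofReal (w p) := by
        rw [Set.inter_iUnion₂]
    _ ≤ ∑ t ∈ T, ∑' p : ↥(Λ ∩ S t), ENNReal.ofReal (w p) :=
        ENNReal.tsum_biUnion_le (fun p => ENNReal.ofReal (w p)) T _

lemma idx_bounds {h D x B V : ℝ} (hh : 0 < h) (hD0 : 0 < D) (hDh : D ≤ h)
    (hx1 : -B ≤ x) (hx2 : x ≤ B) (hDV : (B + h/2)/D ≤ V) :
    -h/2 ≤ x - ⌊(x + h/2)/D⌋*D ∧ x - ⌊(x + h/2)/D⌋*D < h/2 ∧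
    (⌊(x + h/2)/D⌋ : ℝ) ≤ V ∧ -(V+1) < (⌊(x + h/2)/D⌋ : ℝ) := by
  have h1 : (⌊(x + h/2)/D⌋ : ℝ) ≤ (x + h/2)/D := Int.floor_le _
  have h2 : (x + h/2)/D < ⌊(x + h/2)/D⌋ + 1 := Int.lt_floor_add_one _
  have h1' : (⌊(x + h/2)/D⌋ : ℝ) * D ≤ x + h/2 := by rwa [← le_div_iff₀ hD0]
  have h2' : x + h/2 < ((⌊(x + h/2)/D⌋ : ℝ) + 1) * D := by rwa [← div_lt_iff₀ hD0]
  have hup : (x + h/2)/D ≤ (B + h/2)/D := by gcongr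
  have hlo : -((B + h/2)/D) ≤ (x + h/2)/D := by
    rw [← neg_div]; gcongr; linarith
  exact ⟨by nlinarith, by nlinarith, by linarith, by linarith⟩

lemma sum_abs_Icc (J : ℕ) :
    ∑ m ∈ Finset.Icc (-(J : ℤ)) (J : ℤ), |((m : ℤ) : ℝ)| = (J : ℝ) * ((J : ℝ) + 1) := by
  induction J with
  | zero => simp
  | succ J ih =>
    have hset : Finset.Icc (-(J + 1 : ℕ) : ℤ) ((J + 1 : ℕ) : ℤ) =
        insert (-(J + 1 : ℕ) : ℤ) (insert ((J + 1 : ℕ) : ℤ)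
          (Finset.Icc (-(J : ℕ) : ℤ) ((J : ℕ) : ℤ))) := by
      ext x
      simp only [Finset.mem_Icc, Finset.mem_insert]
      push_cast
      omega
    rw [hset, Finset.sum_insert, Finset.sum_insert, ih]
    · rw [abs_of_nonpos (by push_cast; linarith), abs_of_nonneg (by push_cast; linarith)]
      push_cast
      ring
    · simp only [Finset.mem_Icc]
      omega
    · simp only [Finset.mem_insert, Finset.mem_Icc]
      omega

lemma card_Icc_int (z : ℕ) : (Finset.Icc (-(z : ℤ)) (z : ℤ)).card = 2*z + 1 := by
  rw [Int.card_Icc]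
  omega

/-- Number of `a`-slabs (half the range). -/
def covK (h H : ℝ) : ℕ := ⌈H/(2*h)⌉₊ + 1

/-- Range of the `y` and `z₂` grids. -/
def covJ (h H : ℝ) : ℕ := ⌈(H+h) * Real.exp (h/2) / (2*h)⌉₊ + 1

/-- Real bound for the `z₁` grid at height index `m`. -/
def covX (h H : ℝ) (m : ℤ) : ℝ :=
  (H+h) * Real.exp h / (2*h) + (h * Real.exp (h/2) / 2) * |(m : ℝ)|

/-- Range of the `z₁` grid at height index `m`. -/
def covNf (h H : ℝ) (m : ℤ) : ℕ := ⌈covX h H m⌉₊ + 1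

/-- The translate associated to an index `(k, j, m, n)`. -/
def covΓ (h : ℝ) (t : ℤ × ℤ × ℤ × ℤ) : SG :=
  (Real.exp (t.1 * h), t.2.1 * (h * Real.exp (-h/4)),
    (t.2.2.2 * (h * Real.exp (-h/2)), t.2.2.1 * (h * Real.exp (-h/4))))

/-- The index set of the covering family. -/
def covTidx (h H : ℝ) : Finset (ℤ × ℤ × ℤ × ℤ) :=
  (Finset.Icc (-(covK h H : ℤ)) (covK h H : ℤ)) ×ˢ
    ((Finset.Icc (-(covJ h H : ℤ)) (covJ h H : ℤ)) ×ˢ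
      ((Finset.Icc (-(covJ h H : ℤ)) (covJ h H : ℤ)).biUnion fun m =>
        ({m} : Finset ℤ) ×ˢ Finset.Icc (-(covNf h H m : ℤ)) (covNf h H m : ℤ)))

/-- The covering family of translates. -/
def covT (h H : ℝ) : Finset SG := (covTidx h H).image (covΓ h)

lemma covT_pos (h H : ℝ) : ∀ γ ∈ covT h H, 0 < γ.1 := by
  intro γ hγ
  obtain ⟨t, _, rfl⟩ := Finset.mem_image.mp hγ
  exact Real.exp_pos _

set_option maxHeartbeats 1000000 in
lemma covT_cover (h H : ℝ) (hh : 0 < h) (hH : 0 < H) :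
    Qbox H ⊆ ⋃ γ ∈ covT h H, boxAt h γ := by
  rintro ⟨α, σ, τ₁, τ₂⟩ hp
  simp only [Qbox, Set.mem_prod, Set.mem_Ico] at hp
  obtain ⟨⟨hα1, hα2⟩, ⟨hσ1, hσ2⟩, ⟨hτ11, hτ12⟩, hτ21, hτ22⟩ := hp
  have hα0 : 0 < α := lt_of_lt_of_le (Real.exp_pos _) hα1
  have hla1 : -H/2 ≤ Real.log α := (Real.le_log_iff_exp_le hα0).mpr hα1
  have hla2 : Real.log α < H/2 := (Real.log_lt_iff_lt_exp hα0).mpr hα2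
  set la : ℝ := Real.log α with hla
  set k : ℤ := ⌊la/h + 1/2⌋ with hk
  have hkf1 : (k : ℝ) ≤ la/h + 1/2 := Int.floor_le _
  have hkf2 : la/h + 1/2 < k + 1 := Int.lt_floor_add_one _
  set u : ℝ := la - k * h with hu
  have hu1 : -h/2 ≤ u := by
    have := mul_le_mul_of_nonneg_right hkf1 hh.le
    rw [add_mul, div_mul_cancel₀ _ hh.ne'] at this
    rw [hu]; linarith
  have hu2 : u < h/2 := by
    have := mul_lt_mul_of_pos_right hkf2 hh
    rw [add_mul, add_mul, div_mul_cancel₀ _ hh.ne'] at this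
    rw [hu]; linarith
  -- k range
  have hkK : k ∈ Finset.Icc (-(covK h H : ℤ)) (covK h H : ℤ) := by
    have hKv : H/(2*h) ≤ (⌈H/(2*h)⌉₊ : ℝ) := Nat.le_ceil _
    have hKr : (covK h H : ℝ) = (⌈H/(2*h)⌉₊ : ℝ) + 1 := by rw [covK]; push_cast; ring
    have hd1 : la/h ≤ H/(2*h) := by
      have : la/h ≤ (H/2)/h := by gcongr <;> linarith
      rwa [div_div] at this
    have hd2 : -(H/(2*h)) ≤ la/h := by
      have : (-H/2)/h ≤ la/h := by gcongr
      rwa [div_div, neg_div] at this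
    have hup : (k : ℝ) ≤ (covK h H : ℝ) := by rw [hKr]; linarith
    have hlo : -(covK h H : ℝ) ≤ (k : ℝ) := by rw [hKr]; linarith
    rw [Finset.mem_Icc]
    exact ⟨by exact_mod_cast hlo, by exact_mod_cast hup⟩
  -- scales
  set d : ℝ := h * Real.exp (u/2 - h/4) with hd
  set e' : ℝ := h * Real.exp (u - h/2) with he'
  have hd0 : 0 < d := by rw [hd]; positivity
  have he0 : 0 < e' := by rw [he']; positivity
  have hdh : d ≤ h := by
    have h1 : Real.exp (u/2 - h/4) ≤ 1 := Real.exp_le_one_iff.mpr (by linarith)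
    rw [hd]; exact mul_le_of_le_one_right hh.le h1
  have heh : e' ≤ h := by
    have h1 : Real.exp (u - h/2) ≤ 1 := Real.exp_le_one_iff.mpr (by linarith)
    rw [he']; exact mul_le_of_le_one_right hh.le h1
  have hdlb : h * Real.exp (-h/2) ≤ d := by
    rw [hd]
    exact mul_le_mul_of_nonneg_left (Real.exp_le_exp.mpr (by linarith)) hh.le
  have helb : h * Real.exp (-h) ≤ e' := by
    rw [he']
    exact mul_le_mul_of_nonneg_left (Real.exp_le_exp.mpr (by linarith)) hh.le
  have hE1 : (1 : ℝ) ≤ Real.exp (h/2) := Real.one_le_exp (by positivity)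
  -- shared bound for the σ and τ₂ grids
  have hDV : (H/2 + h/2)/d ≤ (H+h) * Real.exp (h/2) / (2*h) := by
    have step1 : (H/2 + h/2)/d ≤ (H/2 + h/2)/(h * Real.exp (-h/2)) := by
      gcongr <;> first | positivity | linarith
    have step2 : (H/2 + h/2)/(h * Real.exp (-h/2)) = (H+h) * Real.exp (h/2)/(2*h) := by
      rw [neg_div, Real.exp_neg]
      rw [eq_div_iff (by positivity)]
      field_simp
      try ring
    linarith
  have hVJ : (H+h) * Real.exp (h/2) / (2*h) ≤ (covJ h H : ℝ) - 1 := by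
    have := Nat.le_ceil ((H+h) * Real.exp (h/2) / (2*h))
    rw [covJ]; push_cast; linarith
  -- j
  obtain ⟨hs1, hs2, hj1, hj2⟩ := idx_bounds (x := σ) (B := H/2) hh hd0 hdh
    (by linarith) (by linarith) hDV
  set j : ℤ := ⌊(σ + h/2)/d⌋ with hj
  set s : ℝ := σ - j * d with hs
  have hjJ : j ∈ Finset.Icc (-(covJ h H : ℤ)) (covJ h H : ℤ) := by
    rw [Finset.mem_Icc]
    constructor
    · exact_mod_cast (show -(covJ h H : ℝ) ≤ (j : ℝ) by linarith)
    · exact_mod_cast (show (j : ℝ) ≤ (covJ h H : ℝ) by linarith)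
  -- m
  obtain ⟨ht21, ht22, hm1, hm2⟩ := idx_bounds (x := τ₂) (B := H/2) hh hd0 hdh
    (by linarith) (by linarith) hDV
  set m : ℤ := ⌊(τ₂ + h/2)/d⌋ with hm
  set t₂ : ℝ := τ₂ - m * d with ht2
  have hmJ : m ∈ Finset.Icc (-(covJ h H : ℤ)) (covJ h H : ℤ) := by
    rw [Finset.mem_Icc]
    constructor
    · exact_mod_cast (show -(covJ h H : ℝ) ≤ (m : ℝ) by linarith)
    · exact_mod_cast (show (m : ℝ) ≤ (covJ h H : ℝ) by linarith)
  -- n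
  set c : ℝ := τ₁ - s * ((m : ℝ) * d) with hc
  set Bn : ℝ := H/2 + (h/2) * (|(m : ℝ)| * d) with hBn
  have hsabs : |s * ((m : ℝ) * d)| ≤ (h/2) * (|(m : ℝ)| * d) := by
    rw [abs_mul, abs_mul, abs_of_nonneg hd0.le]
    have hsle : |s| ≤ h/2 := abs_le.mpr ⟨by linarith, by linarith⟩
    have h0 : (0:ℝ) ≤ |(m:ℝ)| * d := by positivity
    exact mul_le_mul_of_nonneg_right hsle h0
  have hcB : -Bn ≤ c ∧ c ≤ Bn := by
    obtain ⟨l1, l2⟩ := abs_le.mp hsabs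
    constructor <;> (rw [hc, hBn]; linarith)
  have hDVn : (Bn + h/2)/e' ≤ covX h H m := by
    have split : (Bn + h/2)/e' = (H/2 + h/2)/e' + ((h/2) * (|(m : ℝ)| * d))/e' := by
      rw [hBn]; ring
    have p1 : (H/2 + h/2)/e' ≤ (H+h) * Real.exp h / (2*h) := by
      have s1 : (H/2 + h/2)/e' ≤ (H/2 + h/2)/(h * Real.exp (-h)) := by
        gcongr <;> first | positivity | linarith
      have s2 : (H/2 + h/2)/(h * Real.exp (-h)) = (H+h) * Real.exp h/(2*h) := by
        rw [Real.exp_neg, eq_div_iff (by positivity)]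
        field_simp
        try ring
      linarith
    have p2 : ((h/2) * (|(m : ℝ)| * d))/e' ≤ (h * Real.exp (h/2)/2) * |(m : ℝ)| := by
      have hde : d / e' = Real.exp (h/4 - u/2) := by
        rw [hd, he', mul_div_mul_left _ _ hh.ne', ← Real.exp_sub]
        congr 1
        ring
      have hde2 : d / e' ≤ Real.exp (h/2) := by
        rw [hde, Real.exp_le_exp]; linarith
      calc ((h/2) * (|(m : ℝ)| * d))/e' = (h/2) * |(m : ℝ)| * (d/e') := by ring
        _ ≤ (h/2) * |(m : ℝ)| * Real.exp (h/2) :=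
            mul_le_mul_of_nonneg_left hde2 (by positivity)
        _ = (h * Real.exp (h/2)/2) * |(m : ℝ)| := by ring
    rw [split]
    simp only [covX]
    linarith
  obtain ⟨ht11, ht12, hn1, hn2⟩ := idx_bounds (x := c) (B := Bn) hh he0 heh
    hcB.1 hcB.2 hDVn
  set n : ℤ := ⌊(c + h/2)/e'⌋ with hn
  set t₁ : ℝ := c - n * e' with ht1
  have hnN : n ∈ Finset.Icc (-(covNf h H m : ℤ)) (covNf h H m : ℤ) := by
    have hXc : covX h H m ≤ (⌈covX h H m⌉₊ : ℝ) := Nat.le_ceil _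
    have hNfr : (covNf h H m : ℝ) = (⌈covX h H m⌉₊ : ℝ) + 1 := by rw [covNf]; push_cast; ring
    rw [Finset.mem_Icc]
    constructor
    · exact_mod_cast (show -(covNf h H m : ℝ) ≤ (n : ℝ) by rw [hNfr]; linarith)
    · exact_mod_cast (show (n : ℝ) ≤ (covNf h H m : ℝ) by rw [hNfr]; linarith)
  -- index membership
  have hidx : (k, j, m, n) ∈ covTidx h H := by
    rw [covTidx]
    refine Finset.mem_product.mpr ⟨hkK, Finset.mem_product.mpr ⟨hjJ, ?_⟩⟩
    exact Finset.mem_biUnion.mpr ⟨m, hmJ,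
      Finset.mem_product.mpr ⟨Finset.mem_singleton_self m, hnN⟩⟩
  have hexp : ∀ v w : ℝ, Real.exp v * Real.exp w = Real.exp (v + w) :=
    fun v w => (Real.exp_add v w).symm
  refine Set.mem_iUnion₂.mpr
    ⟨covΓ h (k, j, m, n), Finset.mem_coe.mpr (Finset.mem_image_of_mem _ hidx), ?_⟩
  refine ⟨(Real.exp u, s, (t₁, t₂)), ?_, ?_⟩
  · simp only [Qbox, Set.mem_prod, Set.mem_Ico]
    refine ⟨⟨?_, ?_⟩, ⟨by linarith, by linarith⟩, ⟨by linarith, by linarith⟩,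
      by linarith, by linarith⟩
    · rw [Real.exp_le_exp]; linarith
    · rw [Real.exp_lt_exp]; linarith
  · -- smul (covΓ h (k,j,m,n)) q = p
    simp only [smul, Ss, Aa, covΓ, sqrt_exp', Prod.mk.injEq, Prod.mk_add_mk]
    have E1 : Real.exp u * Real.exp ((k : ℝ) * h) = α := by
      rw [hexp, show u + (k : ℝ)*h = la from by rw [hu]; ring]
      exact Real.exp_log hα0
    have E2 : Real.exp (u/2) * (h * Real.exp (-h/4)) = d := by
      rw [hd, show Real.exp (u/2) * (h * Real.exp (-h/4))
          = h * (Real.exp (u/2) * Real.exp (-h/4)) from by ring, hexp]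
      congr 1
      ring
    have E3 : Real.exp u * (h * Real.exp (-h/2)) = e' := by
      rw [he', show Real.exp u * (h * Real.exp (-h/2))
          = h * (Real.exp u * Real.exp (-h/2)) from by ring, hexp]
      congr 1
      ring
    refine ⟨E1, ?_, ?_, ?_⟩
    · rw [show s + (j : ℝ) * (h * Real.exp (-h/4)) * Real.exp (u/2)
          = s + (j : ℝ) * (Real.exp (u/2) * (h * Real.exp (-h/4))) from by ring, E2, hs]
      ring
    · rw [show Real.exp u * ((n : ℝ) * (h * Real.exp (-h/2)))
          = (n : ℝ) * (Real.exp u * (h * Real.exp (-h/2))) from by ring, E3,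
         show s * (Real.exp (u/2) * ((m : ℝ) * (h * Real.exp (-h/4))))
          = s * ((m : ℝ) * (Real.exp (u/2) * (h * Real.exp (-h/4)))) from by ring, E2,
         ht1, hc]
      ring
    · rw [show Real.exp (u/2) * ((m : ℝ) * (h * Real.exp (-h/4)))
          = (m : ℝ) * (Real.exp (u/2) * (h * Real.exp (-h/4))) from by ring, E2, ht2]
      ring

set_option maxHeartbeats 2000000 in
lemma covT_card (h H : ℝ) (hh : 0 < h) (hH : 0 < H) :
    ((covT h H).card : ℝ) ≤ Real.exp (2*h) * (1 + h/4) / h^4 * (H + 7*h)^4 := by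
  set E : ℝ := Real.exp (h/2) with hE
  have hE1 : (1:ℝ) ≤ E := Real.one_le_exp (by positivity)
  have hE0 : (0:ℝ) < E := lt_of_lt_of_le one_pos hE1
  have hEh : Real.exp h = E^2 := by
    rw [hE, ← Real.exp_nat_mul]; push_cast; ring_nf
  have hE2h : Real.exp (2*h) = E^4 := by
    rw [hE, ← Real.exp_nat_mul]; push_cast; ring_nf
  set P : ℝ := H + 7*h with hP
  have hP0 : 0 < P := by rw [hP]; linarith
  clear_value E P
  -- natural number cardinality
  set MN : Finset (ℤ × ℤ) := (Finset.Icc (-(covJ h H : ℤ)) (covJ h H : ℤ)).biUnion fun m =>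
    ({m} : Finset ℤ) ×ˢ Finset.Icc (-(covNf h H m : ℤ)) (covNf h H m : ℤ) with hMN
  have hc1 : (covT h H).card ≤ (2*covK h H+1) * ((2*covJ h H+1) * MN.card) := by
    calc (covT h H).card ≤ (covTidx h H).card := Finset.card_image_le
      _ = (2*covK h H+1) * ((2*covJ h H+1) * MN.card) := by
          rw [covTidx, Finset.card_product, Finset.card_product, card_Icc_int, card_Icc_int]
  have hc2 : (MN.card : ℝ) ≤ ∑ m ∈ Finset.Icc (-(covJ h H : ℤ)) (covJ h H : ℤ),
      (2*(covNf h H m : ℝ) + 1) := by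
    have := Finset.card_biUnion_le (s := Finset.Icc (-(covJ h H : ℤ)) (covJ h H : ℤ))
      (t := fun m => ({m} : Finset ℤ) ×ˢ Finset.Icc (-(covNf h H m : ℤ)) (covNf h H m : ℤ))
    rw [hMN]
    calc ((((Finset.Icc (-(covJ h H : ℤ)) (covJ h H : ℤ)).biUnion fun m =>
        ({m} : Finset ℤ) ×ˢ Finset.Icc (-(covNf h H m : ℤ)) (covNf h H m : ℤ)).card : ℝ))
        ≤ ((∑ m ∈ Finset.Icc (-(covJ h H : ℤ)) (covJ h H : ℤ),
            (({m} : Finset ℤ) ×ˢ Finset.Icc (-(covNf h H m : ℤ)) (covNf h H m : ℤ)).card : ℕ) : ℝ) := by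
          exact_mod_cast this
      _ = ∑ m ∈ Finset.Icc (-(covJ h H : ℤ)) (covJ h H : ℤ), (2*(covNf h H m : ℝ) + 1) := by
          push_cast
          refine Finset.sum_congr rfl fun m _ => ?_
          rw [Finset.card_product, Finset.card_singleton, card_Icc_int]
          push_cast
          ring
  -- real bounds on the grid sizes
  have hXpos : ∀ m : ℤ, 0 ≤ covX h H m := by
    intro m
    rw [covX]
    positivity
  have hNfb : ∀ m : ℤ, (covNf h H m : ℝ) ≤ covX h H m + 2 := by
    intro m
    rw [covNf]
    push_cast
    have := Nat.ceil_lt_add_one (hXpos m)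
    linarith
  have hKb : (covK h H : ℝ) ≤ H/(2*h) + 2 := by
    rw [covK]
    push_cast
    have := Nat.ceil_lt_add_one (show (0:ℝ) ≤ H/(2*h) by positivity)
    linarith
  have hJb : (covJ h H : ℝ) ≤ (H+h)*E/(2*h) + 2 := by
    rw [covJ]
    push_cast
    have := Nat.ceil_lt_add_one (show (0:ℝ) ≤ (H+h)*Real.exp (h/2)/(2*h) by positivity)
    rw [hE]
    linarith
  -- sum bound
  have hsum : ∑ m ∈ Finset.Icc (-(covJ h H : ℤ)) (covJ h H : ℤ), (2*(covNf h H m : ℝ) + 1)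
      ≤ (2*(covJ h H : ℝ)+1) * ((H+h)*E^2/h + 5)
        + (h*E) * ((covJ h H : ℝ) * ((covJ h H : ℝ)+1)) := by
    have step1 : ∑ m ∈ Finset.Icc (-(covJ h H : ℤ)) (covJ h H : ℤ), (2*(covNf h H m : ℝ) + 1)
        ≤ ∑ m ∈ Finset.Icc (-(covJ h H : ℤ)) (covJ h H : ℤ),
          (((H+h)*E^2/h + 5) + (h*E) * |(m:ℝ)|) := by
      refine Finset.sum_le_sum fun m _ => ?_
      have h1 := hNfb m
      have h2 : covX h H m = (H+h)*E^2/(2*h) + (h*E/2) * |(m:ℝ)| := by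
        rw [covX, hEh, ← hE]
      have h3 : (H+h)*E^2/h = 2*((H+h)*E^2/(2*h)) := by ring
      linarith
    have step2 : ∑ m ∈ Finset.Icc (-(covJ h H : ℤ)) (covJ h H : ℤ),
          (((H+h)*E^2/h + 5) + (h*E) * |(m:ℝ)|)
        = (2*(covJ h H : ℝ)+1) * ((H+h)*E^2/h + 5)
          + (h*E) * ((covJ h H : ℝ) * ((covJ h H : ℝ)+1)) := by
      rw [Finset.sum_add_distrib, Finset.sum_const, ← Finset.mul_sum, sum_abs_Icc,
        card_Icc_int, nsmul_eq_mul]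
      push_cast
      ring
    linarith [step1, step2.symm.le]
  -- assemble
  have hfin : ((covT h H).card : ℝ)
      ≤ (P/h) * ((E*P/h) * ((E*P/h) * (E^2*P/h) + (h*E) * ((E*P/(2*h)) * (E*P/(2*h))))) := by
    have c0 : ((covT h H).card : ℝ)
        ≤ (2*(covK h H : ℝ)+1) * ((2*(covJ h H : ℝ)+1) * (MN.card : ℝ)) := by
      exact_mod_cast hc1
    have cK : 2*(covK h H : ℝ)+1 ≤ P/h := by
      rw [le_div_iff₀ hh]
      have h1 := mul_le_mul_of_nonneg_right hKb hh.le
      have h2 : (H/(2*h) + 2) * h = H/2 + 2*h := by field_simp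
      rw [h2] at h1
      rw [hP]
      nlinarith
    have cJ : 2*(covJ h H : ℝ)+1 ≤ E*P/h := by
      rw [le_div_iff₀ hh]
      have h2 : ((H+h)*E/(2*h) + 2) * (2*h) = (H+h)*E + 4*h := by field_simp; ring
      have := mul_le_mul_of_nonneg_right hJb (by positivity : (0:ℝ) ≤ 2*h)
      rw [h2] at this
      have hEP : E*P = E*(H+h) + 6*h*E := by rw [hP]; ring
      nlinarith
    have cJ1 : (covJ h H : ℝ) ≤ E*P/(2*h) := by
      rw [le_div_iff₀ (by positivity : (0:ℝ) < 2*h)]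
      have h2 : ((H+h)*E/(2*h) + 2) * (2*h) = (H+h)*E + 4*h := by field_simp; ring
      have := mul_le_mul_of_nonneg_right hJb (by positivity : (0:ℝ) ≤ 2*h)
      rw [h2] at this
      nlinarith [hP0]
    have cJ2 : (covJ h H : ℝ)+1 ≤ E*P/(2*h) := by
      rw [le_div_iff₀ (by positivity : (0:ℝ) < 2*h)]
      have h2 : ((H+h)*E/(2*h) + 2) * (2*h) = (H+h)*E + 4*h := by field_simp; ring
      have := mul_le_mul_of_nonneg_right hJb (by positivity : (0:ℝ) ≤ 2*h)
      rw [h2] at this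
      nlinarith [hP0]
    have cB : (H+h)*E^2/h + 5 ≤ E^2*P/h := by
      have hE2 : (1:ℝ) ≤ E^2 := one_le_pow₀ hE1
      have hrw : E^2*P/h = (H+h)*E^2/h + 6*E^2 := by rw [hP]; field_simp; ring
      rw [hrw]
      linarith
    have cS : (MN.card : ℝ) ≤ (E*P/h) * (E^2*P/h) + (h*E) * ((E*P/(2*h)) * (E*P/(2*h))) := by
      refine le_trans (le_trans hc2 hsum) ?_
      have t1 : (2*(covJ h H : ℝ)+1) * ((H+h)*E^2/h + 5) ≤ (E*P/h) * (E^2*P/h) := by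
        apply mul_le_mul cJ cB (by positivity) (by positivity)
      have t2 : (h*E) * ((covJ h H : ℝ) * ((covJ h H : ℝ)+1))
          ≤ (h*E) * ((E*P/(2*h)) * (E*P/(2*h))) := by
        apply mul_le_mul_of_nonneg_left _ (by positivity)
        apply mul_le_mul cJ1 cJ2 (by positivity) (by positivity)
      linarith
    calc ((covT h H).card : ℝ)
        ≤ (2*(covK h H : ℝ)+1) * ((2*(covJ h H : ℝ)+1) * (MN.card : ℝ)) := c0
      _ ≤ (P/h) * ((E*P/h) * ((E*P/h) * (E^2*P/h) + (h*E) * ((E*P/(2*h)) * (E*P/(2*h))))) := by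
          apply mul_le_mul cK _ (by positivity) (by positivity)
          apply mul_le_mul cJ cS (by positivity) (by positivity)
  refine hfin.trans (le_of_eq ?_)
  rw [hE2h]
  field_simp
  ring

lemma wNum_box_le (Λ : Set SG) (w : SG → ℝ) (h R : ℝ) (hh : 0 < h) (hR : 0 ≤ R)
    (hbound : ∀ g : SG, 0 < g.1 → wNum Λ w (boxAt h g) ≤ ENNReal.ofReal R)
    (H : ℝ) (hH : 0 < H) (hHgood : (1 + h/4) * (H + 7*h)^4 ≤ Real.exp (h/4) * H^4)
    (g : SG) (hg : 0 < g.1) :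
    wNum Λ w (boxAt H g) ≤ ENNReal.ofReal (R * Real.exp (9*h/4) / h^4 * H^4) := by
  have hsub : boxAt H g ⊆ ⋃ γ ∈ covT h H, boxAt h (smul g γ) := by
    rintro p ⟨q, hq, rfl⟩
    have hq2 := covT_cover h H hh hH hq
    obtain ⟨γ, hγ, hqγ⟩ := Set.mem_iUnion₂.mp hq2
    refine Set.mem_iUnion₂.mpr ⟨γ, hγ, ?_⟩
    rw [boxAt_smul]
    exact ⟨q, hqγ, rfl⟩
  calc wNum Λ w (boxAt H g)
      ≤ wNum Λ w (⋃ γ ∈ covT h H, boxAt h (smul g γ)) := wNum_mono _ _ hsub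
    _ ≤ ∑ γ ∈ covT h H, wNum Λ w (boxAt h (smul g γ)) := wNum_biUnion_le _ _ _ _
    _ ≤ ∑ _γ ∈ covT h H, ENNReal.ofReal R := by
        refine Finset.sum_le_sum fun γ hγ => ?_
        refine hbound _ ?_
        have h1 : (smul g γ).1 = γ.1 * g.1 := rfl
        rw [h1]
        exact mul_pos (covT_pos h H γ hγ) hg
    _ = ((covT h H).card : ℝ≥0∞) * ENNReal.ofReal R := by
        rw [Finset.sum_const, nsmul_eq_mul]
    _ = ENNReal.ofReal (((covT h H).card : ℝ) * R) := by
        rw [ENNReal.ofReal_mul (by positivity), ENNReal.ofReal_natCast]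
    _ ≤ ENNReal.ofReal (R * Real.exp (9*h/4) / h^4 * H^4) := by
        apply ENNReal.ofReal_le_ofReal
        have hcard := covT_card h H hh hH
        have step1 : ((covT h H).card : ℝ) * R
            ≤ (Real.exp (2*h) * (1 + h/4) / h^4 * (H + 7*h)^4) * R := by
          exact mul_le_mul_of_nonneg_right hcard hR
        have step2 : Real.exp (2*h) * (1 + h/4) / h^4 * (H + 7*h)^4
            ≤ Real.exp (9*h/4) / h^4 * H^4 := by
          have e1 : Real.exp (2*h) * Real.exp (h/4) = Real.exp (9*h/4) := by
            rw [← Real.exp_add]; congr 1; ring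
          have e2 : Real.exp (2*h) * (1 + h/4) / h^4 * (H + 7*h)^4
              = Real.exp (2*h) / h^4 * ((1 + h/4) * (H + 7*h)^4) := by ring
          have e3 : Real.exp (9*h/4) / h^4 * H^4
              = Real.exp (2*h) / h^4 * (Real.exp (h/4) * H^4) := by
            rw [← e1]; ring
          rw [e2, e3]
          exact mul_le_mul_of_nonneg_left hHgood (by positivity)
        calc ((covT h H).card : ℝ) * R
            ≤ (Real.exp (2*h) * (1 + h/4) / h^4 * (H + 7*h)^4) * R := step1
          _ ≤ (Real.exp (9*h/4) / h^4 * H^4) * R := by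
              exact mul_le_mul_of_nonneg_right step2 hR
          _ = R * Real.exp (9*h/4) / h^4 * H^4 := by ring

lemma eventually_good (h : ℝ) (hh : 0 < h) :
    ∀ᶠ H in (atTop : Filter ℝ), 0 < H ∧ (1 + h/4) * (H + 7*h)^4 ≤ Real.exp (h/4) * H^4 := by
  have hlt : (1:ℝ) + h/4 < Real.exp (h/4) := by
    have := Real.add_one_lt_exp (x := h/4) (by positivity)
    linarith
  have htend0 : Tendsto (fun H : ℝ => 1 + (7*h) * H⁻¹) atTop (nhds (1 + (7*h) * 0)) :=
    tendsto_const_nhds.add (tendsto_const_nhds.mul tendsto_inv_atTop_zero)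
  have heq : (fun H : ℝ => (H + 7*h)/H) =ᶠ[atTop] fun H => 1 + (7*h) * H⁻¹ := by
    filter_upwards [eventually_gt_atTop (0:ℝ)] with H hH
    field_simp
  have htend : Tendsto (fun H : ℝ => (1 + h/4) * ((H + 7*h)/H)^4) atTop
      (nhds ((1 + h/4) * (1 + (7*h) * 0)^4)) :=
    tendsto_const_nhds.mul ((htend0.congr' heq.symm).pow 4)
  have hlim : (1 + h/4) * ((1:ℝ) + (7*h) * 0)^4 < Real.exp (h/4) := by
    norm_num
    linarith
  filter_upwards [eventually_gt_atTop (0:ℝ), htend.eventually_lt_const hlim] with H hH hHlt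
  refine ⟨hH, ?_⟩
  have hpow : ((H + 7*h)/H)^4 = (H + 7*h)^4 / H^4 := div_pow _ _ _
  rw [hpow] at hHlt
  have hH4 : (0:ℝ) < H^4 := by positivity
  rw [mul_div_assoc'] at hHlt
  rw [div_lt_iff₀ hH4] at hHlt
  nlinarith

/-- If for some `h > 0` the weighted counts `#_w(Λ ∩ Q_h(x,y,z))` are uniformly bounded by `R`,
then the upper weighted shearlet density is finite; in fact `D⁺(Λ,w) ≤ R e^{9h/4}/h⁴`. -/
theorem upperDensity_le_of_bounded_count (Λ : Set SG) (w : SG → ℝ)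
    (hΛ : ∀ p ∈ Λ, 0 < p.1) (hw : ∀ p ∈ Λ, 0 < w p)
    (h R : ℝ) (hh : 0 < h) (hR : 0 ≤ R)
    (hbound : ∀ g : SG, 0 < g.1 → wNum Λ w (boxAt h g) ≤ ENNReal.ofReal R) :
    upperDensity Λ w ≠ ⊤ ∧
    upperDensity Λ w ≤ ENNReal.ofReal (R * Real.exp (9 * h / 4) / h ^ 4) := by
  have hC0 : 0 ≤ R * Real.exp (9 * h / 4) / h ^ 4 := by positivity
  have key : ∀ᶠ H in (atTop : Filter ℝ),
      (⨆ (g : SG) (_ : 0 < g.1), wNum Λ w (boxAt H g) / ENNReal.ofReal (H ^ 4))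
        ≤ ENNReal.ofReal (R * Real.exp (9 * h / 4) / h ^ 4) := by
    filter_upwards [eventually_good h hh] with H hHg
    obtain ⟨hH, hHgood⟩ := hHg
    refine iSup₂_le fun g hg => ?_
    have h1 := wNum_box_le Λ w h R hh hR hbound H hH hHgood g hg
    have hH4 : (0:ℝ) < H ^ 4 := by positivity
    have hne0 : ENNReal.ofReal (H ^ 4) ≠ 0 := by
      simp [ENNReal.ofReal_eq_zero]
      linarith
    have hnetop : ENNReal.ofReal (H ^ 4) ≠ ⊤ := ENNReal.ofReal_ne_top
    calc wNum Λ w (boxAt H g) / ENNReal.ofReal (H ^ 4)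
        ≤ ENNReal.ofReal (R * Real.exp (9*h/4) / h^4 * H^4) / ENNReal.ofReal (H ^ 4) := by
          exact ENNReal.div_le_div_right h1 _
      _ = ENNReal.ofReal (R * Real.exp (9*h/4) / h^4) := by
          rw [ENNReal.ofReal_mul hC0, mul_div_assoc, ENNReal.div_self hne0 hnetop, mul_one]
      _ = ENNReal.ofReal (R * Real.exp (9 * h / 4) / h ^ 4) := by norm_num
  have hle : upperDensity Λ w ≤ ENNReal.ofReal (R * Real.exp (9 * h / 4) / h ^ 4) := by
    exact Filter.limsup_le_of_le (by isBoundedDefault) key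
  exact ⟨ne_top_of_le_ne_top ENNReal.ofReal_ne_top hle, hle⟩


end
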